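/- Let 0 ≤ α ≤ 1/2. For arbitrary signs ±, ±₁, ±₂, real numbers λ, μ, and nonzero η, ξ ∈ ℝⁿ, the angle satisfies ∠(±₁η, ±₂ξ) ≲ ⟨(λ+μ) ± |η+ξ|⟩^{1/2−α} / min(⟨η⟩,⟨ξ⟩)^{1/2−α} + (⟨λ ±₁ |η|⟩^{1/2} + ⟨μ ±₂ |ξ|⟩^{1/2}) / min(⟨η⟩,⟨ξ⟩)^{1/2}. -/

import Mathlib

open MeasureTheory Complex InnerProductGeometry
open scoped FourierTransform ENNReal RealInnerProductSpace

noncomputable section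

abbrev ES (n : ℕ) := EuclideanSpace ℝ (Fin n)

/-- spatial part of a spacetime frequency -/
def spart {n : ℕ} (z : ES (n+1)) : ES n := WithLp.toLp 2 (fun (i : Fin n) => z i.succ)

/-- inhomogeneous Sobolev norm via Fourier transform, ℝ≥0∞-valued -/
def sobolevNormE (n : ℕ) (s : ℝ) (f : ES n → ℂ) : ℝ≥0∞ :=
  (∫⁻ ξ : ES n, ENNReal.ofReal ((1 + ‖ξ‖^2) ^ s) * ((‖𝓕 f ξ‖₊ : ℝ≥0∞)) ^ 2) ^ (1/2 : ℝ)

/-- wave-Sobolev norm `H^{s,b}` on spacetime `ℝ^{1+n}` -/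
def waveNormE (n : ℕ) (s b : ℝ) (u : ES (n+1) → ℂ) : ℝ≥0∞ :=
  (∫⁻ z : ES (n+1), ENNReal.ofReal ((1 + ‖spart z‖^2) ^ s *
      (1 + (|z 0| - ‖spart z‖)^2) ^ b) * ((‖𝓕 u z‖₊ : ℝ≥0∞)) ^ 2) ^ (1/2 : ℝ)

/-- Fourier multiplier operator -/
def fmul {n : ℕ} (m : ES n → ℂ) (f : ES n → ℂ) : ES n → ℂ :=
  fun x => 𝓕⁻ (fun ξ => m ξ * 𝓕 f ξ) x

/-- partial derivative in the `k`-th coordinate direction -/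
def pdx {n : ℕ} {F : Type*} [NormedAddCommGroup F] [NormedSpace ℝ F]
    (k : Fin n) (f : ES n → F) (x : ES n) : F :=
  fderiv ℝ f x (EuclideanSpace.single k 1)

/-- japanese bracket of a real number -/
def jb (x : ℝ) : ℝ := Real.sqrt (1 + x^2)

/-- japanese bracket of a vector -/
def jbv {n : ℕ} (x : ES n) : ℝ := Real.sqrt (1 + ‖x‖^2)


set_option maxHeartbeats 1000000

lemma one_le_jb (x : ℝ) : 1 ≤ jb x := by
  rw [jb]
  have h := Real.sqrt_le_sqrt (show (1:ℝ) ≤ 1 + x^2 by nlinarith)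
  simpa using h

lemma abs_le_jb (x : ℝ) : |x| ≤ jb x := by
  rw [jb]
  have h := Real.sqrt_le_sqrt (show x^2 ≤ 1 + x^2 by nlinarith)
  simpa [Real.sqrt_sq_eq_abs] using h

lemma one_le_jbv {n : ℕ} (x : ES n) : 1 ≤ jbv x := by
  rw [jbv]
  have h := Real.sqrt_le_sqrt (show (1:ℝ) ≤ 1 + ‖x‖^2 by nlinarith [norm_nonneg x])
  simpa using h


lemma sqrt_two_sq : (Real.sqrt 2)^2 = 2 := Real.sq_sqrt (by norm_num)

lemma one_le_sqrt_two : (1:ℝ) ≤ Real.sqrt 2 := by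
  nlinarith [sqrt_two_sq, Real.sqrt_nonneg 2]

lemma sqrt_two_le_two : Real.sqrt 2 ≤ 2 := by
  nlinarith [sqrt_two_sq, Real.sqrt_nonneg 2]

lemma sqrt_two_le_142 : Real.sqrt 2 ≤ 1.42 := by
  nlinarith [sqrt_two_sq, Real.sqrt_nonneg 2]

lemma pi_sq_le : Real.pi^2 ≤ 9.9225 := by
  nlinarith [Real.pi_pos, Real.pi_lt_d2.le]

lemma sqrt_two_mul_pi_sq_le : Real.sqrt 2 * Real.pi^2 ≤ 16 := by
  have h := mul_le_mul sqrt_two_le_142 pi_sq_le (sq_nonneg Real.pi) (by norm_num)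
  linarith

lemma aux_same (r s u c I : ℝ) (hr : 0 < r) (hs : 0 < s) (hu : 0 ≤ u)
    (htri : u ≤ r + s) (hsq : u^2 = r^2 + 2*I + s^2) (hcos : c * (r*s) = I)
    (hc : c ≤ 1) : min r s * (1 - c) ≤ 2*(r + s - u) := by
  have h1 : (r+s-u)*(r+s+u) = 2*(r*s)*(1-c) := by linear_combination -hsq + 2*hcos
  have h2 : 2*(r*s)*(1-c) ≤ 2*(r+s)*(r+s-u) := by nlinarith [sq_nonneg (r+s-u)]
  have h3 : min r s * (r+s) ≤ 2*(r*s) := by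
    rcases min_cases r s with ⟨h,h'⟩|⟨h,h'⟩ <;> rw [h] <;> nlinarith
  rw [← mul_le_mul_iff_of_pos_right (show (0:ℝ) < r + s by linarith)]
  have h4 := mul_le_mul_of_nonneg_right h3 (show (0:ℝ) ≤ 1 - c by linarith)
  nlinarith [h2, h4]

lemma aux_diff (r s u c I : ℝ) (hr : 0 < r) (hs : 0 < s) (hu : 0 ≤ u)
    (htri : u ≤ r + s) (htri2 : |r - s| ≤ u)
    (hsq : u^2 = r^2 + 2*I + s^2) (hcos : c * (r*s) = -I)
    (hc : c ≤ 1) : min r s * (1 - c) ≤ 2*(u - |r - s|) := by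
  set d := |r - s| with hd
  have hd0 : 0 ≤ d := abs_nonneg _
  have hdsq : d^2 = (r-s)^2 := sq_abs _
  have hdle : d ≤ r + s := by
    rw [hd, abs_le]; constructor <;> nlinarith
  have h1 : (u-d)*(u+d) = 2*(r*s)*(1-c) := by
    have : u^2 - d^2 = 2*(r*s)*(1-c) := by rw [hdsq]; linear_combination hsq + 2*hcos
    nlinarith [this]
  have h2 : 2*(r*s)*(1-c) ≤ 2*(r+s)*(u-d) := by
    nlinarith [mul_nonneg (sub_nonneg.2 htri2) (show (0:ℝ) ≤ 2*(r+s) - (u+d) by linarith)]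
  have h3 : min r s * (r+s) ≤ 2*(r*s) := by
    rcases min_cases r s with ⟨h,h'⟩|⟨h,h'⟩ <;> rw [h] <;> nlinarith
  rw [← mul_le_mul_iff_of_pos_right (show (0:ℝ) < r + s by linarith)]
  have h4 := mul_le_mul_of_nonneg_right h3 (show (0:ℝ) ≤ 1 - c by linarith)
  nlinarith [h2, h4]


/-- Angle estimate (Lemma 2.1, estimate (angle1)): for `0 ≤ α ≤ 1/2`, arbitrary signs,
`λ, μ ∈ ℝ` and nonzero `η, ξ ∈ ℝⁿ`,
`∠(±₁η, ±₂ξ) ≲ ⟨(λ+μ) ± |η+ξ|⟩^{1/2−α}/min(⟨η⟩,⟨ξ⟩)^{1/2−α}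
  + (⟨λ ±₁ |η|⟩^{1/2} + ⟨μ ±₂ |ξ|⟩^{1/2})/min(⟨η⟩,⟨ξ⟩)^{1/2}`. -/
theorem angle_estimate_one :
    ∃ C : ℝ, 0 < C ∧ ∀ (n : ℕ) (α : ℝ), 0 ≤ α → α ≤ 1/2 →
      ∀ ε ε₁ ε₂ : ℝ, (ε = 1 ∨ ε = -1) → (ε₁ = 1 ∨ ε₁ = -1) → (ε₂ = 1 ∨ ε₂ = -1) →
      ∀ (lam mu : ℝ) (η ξ : ES n), η ≠ 0 → ξ ≠ 0 →
        angle (ε₁ • η) (ε₂ • ξ) ≤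
          C * (jb ((lam + mu) + ε * ‖η + ξ‖) ^ ((1:ℝ)/2 - α) /
                 (min (jbv η) (jbv ξ)) ^ ((1:ℝ)/2 - α) +
               (jb (lam + ε₁ * ‖η‖) ^ ((1:ℝ)/2) + jb (mu + ε₂ * ‖ξ‖) ^ ((1:ℝ)/2)) /
                 (min (jbv η) (jbv ξ)) ^ ((1:ℝ)/2)) := by
  refine ⟨4, by norm_num, ?_⟩
  intro n α hα0 hα2 e e1 e2 he he1 he2 lam mu η ξ hη hξ
  set r := ‖η‖ with hrdef
  set s := ‖ξ‖ with hsdef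
  set u := ‖η + ξ‖ with hudef
  have hr : 0 < r := norm_pos_iff.2 hη
  have hs : 0 < s := norm_pos_iff.2 hξ
  have hu : 0 ≤ u := norm_nonneg _
  have htri : u ≤ r + s := norm_add_le _ _
  have htri2 : |r - s| ≤ u := by
    have h := abs_norm_sub_norm_le η (-ξ)
    simpa [sub_neg_eq_add] using h
  have hsq : u^2 = r^2 + 2*⟪η,ξ⟫ + s^2 := norm_add_sq_real η ξ
  set θ := angle (e1 • η) (e2 • ξ) with hθdef
  have hθ0 : 0 ≤ θ := angle_nonneg _ _
  have hθπ : θ ≤ Real.pi := angle_le_pi _ _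
  set c := Real.cos θ with hcdef
  have hc1 : c ≤ 1 := Real.cos_le_one θ
  have hea : |e| = 1 := by rcases he with rfl|rfl <;> norm_num
  have he1a : |e1| = 1 := by rcases he1 with rfl|rfl <;> norm_num
  have he2a : |e2| = 1 := by rcases he2 with rfl|rfl <;> norm_num
  have hcos : c * (r * s) = (e1 * e2) * ⟪η,ξ⟫ := by
    have h := cos_angle_mul_norm_mul_norm (e1 • η) (e2 • ξ)
    rw [norm_smul, norm_smul, real_inner_smul_left, real_inner_smul_right,
      Real.norm_eq_abs, Real.norm_eq_abs, he1a, he2a] at h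
    rw [← hθdef] at h
    linear_combination h
  have habs : ∀ v : ℝ, u - |v| ≤ |e*u - v| ∧ |v| - u ≤ |e*u - v| := by
    intro v
    have h1 := abs_sub_abs_le_abs_sub (e*u) v
    have h2 := abs_sub_abs_le_abs_sub v (e*u)
    rw [abs_mul, hea, one_mul, _root_.abs_of_nonneg hu] at h1 h2
    refine ⟨h1, ?_⟩
    calc |v| - u ≤ |v - e*u| := h2
      _ = |e*u - v| := abs_sub_comm _ _
  have hkey : min r s * (1 - c) ≤ 2 * |e*u - e1*r - e2*s| := by
    rcases he1 with rfl|rfl <;> rcases he2 with rfl|rfl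
    · have hm := aux_same r s u c ⟪η,ξ⟫ hr hs hu htri hsq (by linear_combination hcos) hc1
      have hg := (habs (1*r + 1*s)).2
      rw [_root_.abs_of_nonneg (by linarith : (0:ℝ) ≤ 1*r + 1*s)] at hg
      rw [show e*u - 1*r - 1*s = e*u - (1*r + 1*s) by ring]
      linarith
    · have hm := aux_diff r s u c ⟪η,ξ⟫ hr hs hu htri htri2 hsq (by linear_combination hcos) hc1
      have hg := (habs (1*r + (-1)*s)).1
      rw [show (1*r + (-1)*s : ℝ) = r - s by ring] at hg
      rw [show e*u - 1*r - (-1)*s = e*u - (r - s) by ring]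
      linarith
    · have hm := aux_diff r s u c ⟪η,ξ⟫ hr hs hu htri htri2 hsq (by linear_combination hcos) hc1
      have hg := (habs ((-1)*r + 1*s)).1
      rw [show ((-1)*r + 1*s : ℝ) = -(r - s) by ring, abs_neg] at hg
      rw [show e*u - (-1)*r - 1*s = e*u - -(r - s) by ring, ← abs_neg,
        show -(e*u - -(r-s)) = -e*u - (r-s) by ring]
      have hg2 : u - |r - s| ≤ |(-e)*u - (r-s)| := by
        have h1 := abs_sub_abs_le_abs_sub ((-e)*u) (r-s)
        rw [abs_mul, abs_neg, hea, one_mul, _root_.abs_of_nonneg hu] at h1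
        exact h1
      rw [show (-e)*u - (r-s) = -e*u - (r-s) by ring] at hg2
      linarith
    · have hm := aux_same r s u c ⟪η,ξ⟫ hr hs hu htri hsq (by linear_combination hcos) hc1
      have hg := (habs ((-1)*r + (-1)*s)).2
      rw [show ((-1)*r + (-1)*s : ℝ) = -(r+s) by ring, abs_neg,
        _root_.abs_of_nonneg (by linarith : (0:ℝ) ≤ r + s)] at hg
      rw [show e*u - (-1)*r - (-1)*s = e*u - -(r + s) by ring]
      linarith
  -- brackets
  set A := jb (lam + mu + e * u) with hAdef
  set B1 := jb (lam + e1 * r) with hB1def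
  set B2 := jb (mu + e2 * s) with hB2def
  set M := min (jbv η) (jbv ξ) with hMdef
  have hA1 : 1 ≤ A := one_le_jb _
  have hB11 : 1 ≤ B1 := one_le_jb _
  have hB21 : 1 ≤ B2 := one_le_jb _
  have hM1 : 1 ≤ M := le_min (one_le_jbv _) (one_le_jbv _)
  have hM0 : 0 < M := lt_of_lt_of_le one_pos hM1
  have hDsum : |e*u - e1*r - e2*s| ≤ A + B1 + B2 := by
    have h1 : |lam + mu + e*u| ≤ A := abs_le_jb _
    have h2 : |lam + e1*r| ≤ B1 := abs_le_jb _
    have h3 : |mu + e2*s| ≤ B2 := abs_le_jb _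
    have h4 : |e*u - e1*r - e2*s| ≤ |lam+mu+e*u| + |lam+e1*r| + |mu+e2*s| := by
      rw [show e*u - e1*r - e2*s = (lam+mu+e*u) + -(lam+e1*r) + -(mu+e2*s) by ring]
      calc |(lam+mu+e*u) + -(lam+e1*r) + -(mu+e2*s)|
          ≤ |lam+mu+e*u| + |-(lam+e1*r)| + |-(mu+e2*s)| := abs_add_three _ _ _
        _ = |lam+mu+e*u| + |lam+e1*r| + |mu+e2*s| := by rw [abs_neg, abs_neg]
    linarith
  set m := min r s with hmdef
  have hm0 : 0 < m := lt_min hr hs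
  rcases le_or_gt M (Real.sqrt 2) with hMs | hMs
  · -- small frequencies: trivial bound
    have hB1h : 1 ≤ B1 ^ ((1:ℝ)/2) := Real.one_le_rpow hB11 (by norm_num)
    have hB2h : 1 ≤ B2 ^ ((1:ℝ)/2) := Real.one_le_rpow hB21 (by norm_num)
    have hMh : M ^ ((1:ℝ)/2) ≤ 2 := by
      calc M ^ ((1:ℝ)/2) ≤ (Real.sqrt 2) ^ ((1:ℝ)/2) :=
            Real.rpow_le_rpow (by linarith) hMs (by norm_num)
        _ ≤ (Real.sqrt 2) ^ (1:ℝ) :=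
            Real.rpow_le_rpow_of_exponent_le one_le_sqrt_two (by norm_num)
        _ = Real.sqrt 2 := Real.rpow_one _
        _ ≤ 2 := sqrt_two_le_two
    have hT2 : 1 ≤ (B1 ^ ((1:ℝ)/2) + B2 ^ ((1:ℝ)/2)) / M ^ ((1:ℝ)/2) := by
      rw [le_div_iff₀ (by positivity), one_mul]
      linarith
    have hT1 : 0 ≤ A ^ ((1:ℝ)/2 - α) / M ^ ((1:ℝ)/2 - α) := by positivity
    have hπ4 : θ ≤ 4 := le_trans hθπ Real.pi_le_four
    linarith
  rcases le_or_gt M A with hMA | hAM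
  · -- large modulation: trivial bound
    have h1 : M ^ ((1:ℝ)/2 - α) ≤ A ^ ((1:ℝ)/2 - α) :=
      Real.rpow_le_rpow (by linarith) hMA (by linarith)
    have hT1 : 1 ≤ A ^ ((1:ℝ)/2 - α) / M ^ ((1:ℝ)/2 - α) := by
      rw [le_div_iff₀ (by positivity), one_mul]; exact h1
    have hT2 : 0 ≤ (B1 ^ ((1:ℝ)/2) + B2 ^ ((1:ℝ)/2)) / M ^ ((1:ℝ)/2) := by positivity
    have hπ4 : θ ≤ 4 := le_trans hθπ Real.pi_le_four
    linarith
  · -- main case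
    have hsqrt2n : 0 ≤ Real.sqrt 2 := Real.sqrt_nonneg 2
    have hm1 : 1 ≤ m := by
      have h1 : Real.sqrt 2 < jbv η := lt_of_lt_of_le hMs (min_le_left _ _)
      have h2 : Real.sqrt 2 < jbv ξ := lt_of_lt_of_le hMs (min_le_right _ _)
      have hr1 : 1 ≤ r := by
        by_contra hcon; push_neg at hcon
        have : jbv η ≤ Real.sqrt 2 := by
          rw [jbv]; apply Real.sqrt_le_sqrt; rw [← hrdef]; nlinarith only [hcon, hr.le]
        linarith
      have hs1 : 1 ≤ s := by
        by_contra hcon; push_neg at hcon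
        have : jbv ξ ≤ Real.sqrt 2 := by
          rw [jbv]; apply Real.sqrt_le_sqrt; rw [← hsdef]; nlinarith only [hcon, hs.le]
        linarith
      exact le_min hr1 hs1
    have hMm : M ≤ Real.sqrt 2 * m := by
      have h5 : M ≤ Real.sqrt (1 + m^2) := by
        rcases min_cases r s with ⟨h,h'⟩|⟨h,h'⟩
        · calc M ≤ jbv η := min_le_left _ _
            _ = Real.sqrt (1 + m^2) := by rw [jbv, ← hrdef, hmdef, h]
        · calc M ≤ jbv ξ := min_le_right _ _
            _ = Real.sqrt (1 + m^2) := by rw [jbv, ← hsdef, hmdef, h]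
      calc M ≤ Real.sqrt (1 + m^2) := h5
        _ ≤ Real.sqrt (2 * m^2) := Real.sqrt_le_sqrt (by nlinarith only [hm1])
        _ = Real.sqrt 2 * m := by
            rw [Real.sqrt_mul (by norm_num), Real.sqrt_sq (by linarith)]
    have hJ : c ≤ 1 - 2/Real.pi^2*θ^2 :=
      Real.cos_le_one_sub_mul_cos_sq (by rw [_root_.abs_of_nonneg hθ0]; exact hθπ)
    have hππ : (0:ℝ) < Real.pi^2 := by positivity
    have h1 : 2/Real.pi^2*θ^2 ≤ 1 - c := by linarith
    have c1 : 2*θ^2 ≤ Real.pi^2*(1-c) := by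
      rw [div_mul_eq_mul_div, div_le_iff₀ hππ] at h1; linarith
    have c2 : 2*(θ^2*m) ≤ Real.pi^2*(m*(1-c)) := by
      linarith only [mul_le_mul_of_nonneg_right c1 hm0.le]
    have c3 : θ^2*m ≤ Real.pi^2*(A+B1+B2) := by
      linarith only [c2, mul_le_mul_of_nonneg_left hkey (show (0:ℝ) ≤ Real.pi^2 by positivity),
        mul_le_mul_of_nonneg_left hDsum (show (0:ℝ) ≤ 2*Real.pi^2 by positivity)]
    have hS0 : (0:ℝ) ≤ A + B1 + B2 := by linarith
    have c4 : θ^2*M ≤ Real.sqrt 2 * (θ^2*m) := by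
      linarith only [mul_le_mul_of_nonneg_left hMm (sq_nonneg θ)]
    have c6 : Real.sqrt 2 * Real.pi^2 ≤ 16 := sqrt_two_mul_pi_sq_le
    have hstep : θ^2*M ≤ 16*(A+B1+B2) := by
      have c5 : Real.sqrt 2*(θ^2*m) ≤ Real.sqrt 2*(Real.pi^2*(A+B1+B2)) :=
        mul_le_mul_of_nonneg_left c3 hsqrt2n
      linarith only [c4, c5, mul_le_mul_of_nonneg_right c6 hS0]
    set X := Real.sqrt (A/M) with hXdef
    set Y := Real.sqrt (B1/M) with hYdef
    set Z := Real.sqrt (B2/M) with hZdef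
    have hX0 : 0 ≤ X := Real.sqrt_nonneg _
    have hY0 : 0 ≤ Y := Real.sqrt_nonneg _
    have hZ0 : 0 ≤ Z := Real.sqrt_nonneg _
    have hX2 : X^2 = A/M := Real.sq_sqrt (by positivity)
    have hY2 : Y^2 = B1/M := Real.sq_sqrt (by positivity)
    have hZ2 : Z^2 = B2/M := Real.sq_sqrt (by positivity)
    have hSdiv : θ^2 ≤ 16*(X^2 + Y^2 + Z^2) := by
      rw [hX2, hY2, hZ2]
      have h7 : θ^2 ≤ 16*(A+B1+B2)/M := by
        rw [le_div_iff₀ hM0]; linarith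
      calc θ^2 ≤ 16*(A+B1+B2)/M := h7
        _ = 16*(A/M + B1/M + B2/M) := by field_simp
    have hXYZ : θ^2 ≤ 16*(X+Y+Z)^2 := by
      nlinarith only [hSdiv, mul_nonneg hX0 hY0, mul_nonneg hX0 hZ0, mul_nonneg hY0 hZ0]
    have h40 : (0:ℝ) ≤ 4*(X+Y+Z) := by positivity
    have hθle : θ ≤ 4*(X+Y+Z) := by
      calc θ = Real.sqrt (θ^2) := (Real.sqrt_sq hθ0).symm
        _ ≤ Real.sqrt (16*(X+Y+Z)^2) := Real.sqrt_le_sqrt hXYZ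
        _ = 4*(X+Y+Z) := by
            rw [show 16*(X+Y+Z)^2 = (4*(X+Y+Z))^2 by ring, Real.sqrt_sq h40]
    have hXT : X ≤ A ^ ((1:ℝ)/2 - α) / M ^ ((1:ℝ)/2 - α) := by
      have hAM1 : A/M ≤ 1 := (div_le_one hM0).2 hAM.le
      have hAM0 : 0 < A/M := by positivity
      calc X = (A/M) ^ ((1:ℝ)/2) := Real.sqrt_eq_rpow _
        _ ≤ (A/M) ^ ((1:ℝ)/2 - α) :=
            Real.rpow_le_rpow_of_exponent_ge hAM0 hAM1 (by linarith)
        _ = A ^ ((1:ℝ)/2 - α) / M ^ ((1:ℝ)/2 - α) :=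
            Real.div_rpow (by linarith) (by linarith) _
    have hYT : Y = B1 ^ ((1:ℝ)/2) / M ^ ((1:ℝ)/2) := by
      rw [hYdef, Real.sqrt_eq_rpow, Real.div_rpow (by linarith) (by linarith)]
    have hZT : Z = B2 ^ ((1:ℝ)/2) / M ^ ((1:ℝ)/2) := by
      rw [hZdef, Real.sqrt_eq_rpow, Real.div_rpow (by linarith) (by linarith)]
    have hfin : Y + Z = (B1 ^ ((1:ℝ)/2) + B2 ^ ((1:ℝ)/2)) / M ^ ((1:ℝ)/2) := by
      rw [hYT, hZT, ← add_div]
    linarith [hθle, hXT, hfin.le, hfin.ge]
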